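/- With ρ♮(r,ω) = (cosh 2r − cos 2ω)/(cosh 2r + cos 2ω) and θ♮(r,ω) = 2 arctan(sin 2ω / sinh 2r), the Cauchy–Riemann-type symmetry identities hold: ∂(log ρ♮)/∂r = ∂θ♮/∂ω = 4 sinh 2r cos 2ω / (sinh² 2r + sin² 2ω) and ∂θ♮/∂r = −∂(log ρ♮)/∂ω = −4 cosh 2r sin 2ω / (sinh² 2r + sin² 2ω). -/

import Mathlib

/-- `log ρ♮(r,ω)` where `ρ♮(r,ω) = (cosh 2r − cos 2ω)/(cosh 2r + cos 2ω)`. -/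
noncomputable def logRhoNat (r ω : ℝ) : ℝ :=
  Real.log ((Real.cosh (2 * r) - Real.cos (2 * ω)) / (Real.cosh (2 * r) + Real.cos (2 * ω)))

/-- `θ♮(r,ω) = 2 arctan(sin 2ω / sinh 2r)`. -/
noncomputable def thetaNat (r ω : ℝ) : ℝ :=
  2 * Real.arctan (Real.sin (2 * ω) / Real.sinh (2 * r))

theorem stmt_5 (r ω : ℝ) (h : Real.sinh (2 * r) ≠ 0) :
    HasDerivAt (fun t => logRhoNat t ω)
      (4 * Real.sinh (2 * r) * Real.cos (2 * ω)
        / (Real.sinh (2 * r) ^ 2 + Real.sin (2 * ω) ^ 2)) r ∧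
    HasDerivAt (fun s => thetaNat r s)
      (4 * Real.sinh (2 * r) * Real.cos (2 * ω)
        / (Real.sinh (2 * r) ^ 2 + Real.sin (2 * ω) ^ 2)) ω ∧
    HasDerivAt (fun t => thetaNat t ω)
      (-(4 * Real.cosh (2 * r) * Real.sin (2 * ω))
        / (Real.sinh (2 * r) ^ 2 + Real.sin (2 * ω) ^ 2)) r ∧
    HasDerivAt (fun s => logRhoNat r s)
      (4 * Real.cosh (2 * r) * Real.sin (2 * ω)
        / (Real.sinh (2 * r) ^ 2 + Real.sin (2 * ω) ^ 2)) ω := by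
  have hr0 : (2:ℝ) * r ≠ 0 := fun h0 => h (by rw [h0, Real.sinh_zero])
  have hcosh : 1 < Real.cosh (2 * r) := Real.one_lt_cosh.2 hr0
  have h1 : 0 < Real.cosh (2*r) - Real.cos (2*ω) := by
    nlinarith [Real.cos_le_one (2*ω)]
  have h2 : 0 < Real.cosh (2*r) + Real.cos (2*ω) := by
    nlinarith [Real.neg_one_le_cos (2*ω)]
  have hs2 : 0 < Real.sinh (2*r)^2 := pow_two_pos_of_ne_zero h
  have hD : 0 < Real.sinh (2*r)^2 + Real.sin (2*ω)^2 := by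
    have := sq_nonneg (Real.sin (2*ω)); linarith
  have hid : Real.cosh (2*r)^2 - Real.cos (2*ω)^2
      = Real.sinh (2*r)^2 + Real.sin (2*ω)^2 := by
    have := Real.cosh_sq (2*r)
    have := Real.sin_sq_add_cos_sq (2*ω)
    linarith
  have h2t : HasDerivAt (fun t : ℝ => 2*t) 2 r := by
    simpa using (hasDerivAt_id r).const_mul 2
  have h2s : HasDerivAt (fun s : ℝ => 2*s) 2 ω := by
    simpa using (hasDerivAt_id ω).const_mul 2
  refine ⟨?_, ?_, ?_, ?_⟩
  · have hA : HasDerivAt (fun t => Real.cosh (2*t) - Real.cos (2*ω))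
        (Real.sinh (2*r) * 2) r := h2t.cosh.sub_const _
    have hB : HasDerivAt (fun t => Real.cosh (2*t) + Real.cos (2*ω))
        (Real.sinh (2*r) * 2) r := h2t.cosh.add_const _
    have hQ := hA.div hB h2.ne'
    have hL := hQ.log (div_ne_zero h1.ne' h2.ne')
    convert hL using 1
    · rfl
    have hAB : (Real.cosh (2*r) - Real.cos (2*ω)) * (Real.cosh (2*r) + Real.cos (2*ω))
        = Real.sinh (2*r)^2 + Real.sin (2*ω)^2 := by rw [← hid]; ring
    rw [← hAB]
    simp only [Pi.div_apply]
    field_simp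
    ring
  · have hf : HasDerivAt (fun s => Real.sin (2*s) / Real.sinh (2*r))
        (Real.cos (2*ω) * 2 / Real.sinh (2*r)) ω := (h2s.sin).div_const _
    have := (hf.arctan).const_mul 2
    convert this using 1
    · rfl
    · rfl
    · rfl
    field_simp
    ring
  · have hsinh : HasDerivAt (fun t => Real.sinh (2*t)) (Real.cosh (2*r) * 2) r := h2t.sinh
    have hf := (hasDerivAt_const r (Real.sin (2*ω))).div hsinh h
    have := (hf.arctan).const_mul 2
    convert this using 1
    · rfl
    · rfl
    · rfl
    simp only [Pi.div_apply]
    field_simp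
    ring
  · have hAB : (Real.cosh (2*r) - Real.cos (2*ω)) * (Real.cosh (2*r) + Real.cos (2*ω))
        = Real.sinh (2*r)^2 + Real.sin (2*ω)^2 := by rw [← hid]; ring
    have hA : HasDerivAt (fun s => Real.cosh (2*r) - Real.cos (2*s))
        (-(-Real.sin (2*ω) * 2)) ω := (h2s.cos).const_sub _
    have hB : HasDerivAt (fun s => Real.cosh (2*r) + Real.cos (2*s))
        (-Real.sin (2*ω) * 2) ω := (h2s.cos).const_add _
    have hQ := hA.div hB h2.ne'
    have hL := hQ.log (div_ne_zero h1.ne' h2.ne')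
    convert hL using 1
    · rfl
    rw [← hAB]
    simp only [Pi.div_apply]
    field_simp
    ring
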